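/- Let $A = \begin{pmatrix} a & b \\ c & d \end{pmatrix} \in \mathrm{SL}_2(\mathbb{C})$ with $a,c \neq 0$ and $bc \neq 0$. In the upper half-space model, the geodesic $\Sigma$ with endpoints $(0,\infty)$ and its image $A^{-1}(\Sigma)$ (the geodesic with endpoints $-b/a$ and $-d/c$) satisfy: $\cosh$ of the distance between them equals $|ad| + |bc| = |bc+1| + |bc|$. -/

import Mathlib

open OnePoint

/-- cosh of the hyperbolic distance between two points of the upper
half-space model of `ℍ³`; a point is a pair `(z, t)` with `z : ℂ` and
height `t > 0`. -/
noncomputable def coshD (p q : ℂ × ℝ) : ℝ :=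
  1 + (‖p.1 - q.1‖ ^ 2 + (p.2 - q.2) ^ 2) / (2 * p.2 * q.2)

/-- The geodesic of the upper half-space model with the given pair of
(distinct) endpoints in `ℂ ∪ {∞}`: a vertical line if one endpoint is `∞`,
otherwise the semicircle over the segment joining the two endpoints. -/
noncomputable def geodesicUHS : OnePoint ℂ → OnePoint ℂ → Set (ℂ × ℝ)
  | OnePoint.infty, OnePoint.infty => ∅
  | OnePoint.infty, (b : ℂ) => {p | 0 < p.2 ∧ p.1 = b}
  | (a : ℂ), OnePoint.infty => {p | 0 < p.2 ∧ p.1 = a}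
  | (a : ℂ), (b : ℂ) =>
      {p | 0 < p.2 ∧ (∃ s : ℝ, p.1 = a + (s : ℂ) * (b - a)) ∧
        ‖p.1 - (a + b) / 2‖ ^ 2 + p.2 ^ 2 = ‖b - a‖ ^ 2 / 4}

/-- The inverse hyperbolic cosine. -/
noncomputable def arcosh (x : ℝ) : ℝ := Real.log (x + Real.sqrt (x ^ 2 - 1))

noncomputable def geodDist (S T : Set (ℂ × ℝ)) : ℝ :=
  sInf {d : ℝ | ∃ p ∈ S, ∃ q ∈ T, d = arcosh (coshD p q)}

/-- Auxiliary: the finite value of an extended complex number (junk value `0` at `∞`). -/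
noncomputable def fv : OnePoint ℂ → ℂ
  | OnePoint.infty => 0
  | (a : ℂ) => a

open Classical in
/-- The cross-ratio `[w₁,w₂;w₃,w₄]` of four extended complex numbers (at most one
of which is `∞` when they are pairwise distinct). -/
noncomputable def crossRatio (w1 w2 w3 w4 : OnePoint ℂ) : ℂ :=
  if w1 = OnePoint.infty then (fv w2 - fv w4) / (fv w2 - fv w3)
  else if w2 = OnePoint.infty then (fv w1 - fv w3) / (fv w1 - fv w4)
  else if w3 = OnePoint.infty then (fv w2 - fv w4) / (fv w1 - fv w4)
  else if w4 = OnePoint.infty then (fv w1 - fv w3) / (fv w2 - fv w3)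
  else ((fv w1 - fv w3) * (fv w2 - fv w4)) / ((fv w1 - fv w4) * (fv w2 - fv w3))

/-! ### Auxiliary lemmas -/

lemma arcosh_cosh' (w : ℝ) (hw : 0 ≤ w) : arcosh (Real.cosh w) = w := by
  unfold arcosh
  have hs : 0 ≤ Real.sinh w := by
    rw [Real.sinh_eq]; have := Real.exp_le_exp.2 (by linarith : -w ≤ w); linarith
  have h1 : Real.cosh w ^ 2 - 1 = Real.sinh w ^ 2 := by
    have := Real.cosh_sq_sub_sinh_sq w; nlinarith
  rw [h1, Real.sqrt_sq hs, Real.cosh_add_sinh, Real.log_exp]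

lemma cosh_arcosh' (X : ℝ) (hX : 1 ≤ X) : Real.cosh (arcosh X) = X := by
  unfold arcosh
  have h0 : (0:ℝ) < X + Real.sqrt (X ^ 2 - 1) := by
    have := Real.sqrt_nonneg (X ^ 2 - 1); linarith
  rw [Real.cosh_eq, Real.exp_log h0, Real.exp_neg, Real.exp_log h0]
  have hs : Real.sqrt (X ^ 2 - 1) ^ 2 = X ^ 2 - 1 := Real.sq_sqrt (by nlinarith)
  field_simp
  nlinarith [hs, Real.sqrt_nonneg (X ^ 2 - 1)]

lemma arcosh_le_arcosh' {X Y : ℝ} (hX : 1 ≤ X) (hXY : X ≤ Y) : arcosh X ≤ arcosh Y := by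
  unfold arcosh
  apply Real.log_le_log (by nlinarith [Real.sqrt_nonneg (X ^ 2 - 1)])
  have : Real.sqrt (X ^ 2 - 1) ≤ Real.sqrt (Y ^ 2 - 1) := Real.sqrt_le_sqrt (by nlinarith)
  linarith

lemma height_sq' (u v : ℂ) (σ t : ℝ)
    (hcirc : ‖((u + (σ:ℂ) * (v - u)) - (u + v) / 2)‖ ^ 2 + t ^ 2
      = ‖(v - u)‖ ^ 2 / 4) :
    t ^ 2 = σ * (1 - σ) * ‖(u - v)‖ ^ 2 := by
  have h1 : (u + (σ:ℂ) * (v - u)) - (u + v) / 2 = ((σ - 1/2 : ℝ) : ℂ) * (v - u) := by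
    push_cast; ring
  rw [h1, norm_mul, mul_pow, Complex.norm_real, Real.norm_eq_abs, sq_abs] at hcirc
  have h2 : ‖(u - v)‖ = ‖(v - u)‖ := by
    rw [← neg_sub, norm_neg]
  rw [h2]; nlinarith [hcirc]

lemma absz_sq' (u v : ℂ) (σ t : ℝ)
    (ht : t ^ 2 = σ * (1 - σ) * ‖(u - v)‖ ^ 2) :
    ‖(u + (σ:ℂ) * (v - u))‖ ^ 2 + t ^ 2
      = (1 - σ) * ‖u‖ ^ 2 + σ * ‖v‖ ^ 2 := by
  rw [ht]
  simp only [Complex.sq_norm, Complex.normSq_apply, Complex.add_re, Complex.add_im,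
    Complex.mul_re, Complex.mul_im, Complex.sub_re, Complex.sub_im,
    Complex.ofReal_re, Complex.ofReal_im]
  ring

/-- Lower bound: coshD between a point of the axis and a point of the semicircle. -/
lemma coshD_lb' (u v : ℂ) (huv : u ≠ v) (s t : ℝ) (z : ℂ) (hs : 0 < s) (ht : 0 < t)
    (σ : ℝ) (hz : z = u + (σ:ℂ) * (v - u))
    (hcirc : ‖(z - (u + v) / 2)‖ ^ 2 + t ^ 2 = ‖(v - u)‖ ^ 2 / 4) :
    (‖u‖ + ‖v‖) / ‖(u - v)‖ ≤ coshD (0, s) (z, t) := by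
  set x := ‖u‖ with hx
  set y := ‖v‖ with hy
  set L := ‖(u - v)‖ with hL
  have hL0 : 0 < L := by
    rw [hL]; exact norm_pos_iff.2 (sub_ne_zero.2 huv)
  subst hz
  have ht2 : t ^ 2 = σ * (1 - σ) * L ^ 2 := height_sq' u v σ t hcirc
  have hzt : ‖(u + (σ:ℂ) * (v - u))‖ ^ 2 + t ^ 2 = (1 - σ) * x ^ 2 + σ * y ^ 2 :=
    absz_sq' u v σ t ht2
  set az := ‖(u + (σ:ℂ) * (v - u))‖ with haz
  have haz0 : 0 ≤ az := norm_nonneg _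
  have hx0 : 0 ≤ x := norm_nonneg _
  have hy0 : 0 ≤ y := norm_nonneg _
  set M := (x + y) / L with hM
  have hM0 : 0 ≤ M := div_nonneg (by linarith) hL0.le
  have key : M ^ 2 * t ^ 2 ≤ az ^ 2 + t ^ 2 := by
    rw [hzt, ht2, hM, div_pow]
    rw [div_mul_eq_mul_div, div_le_iff₀ (by positivity)]
    nlinarith [sq_nonneg ((1 - σ) * x - σ * y), sq_nonneg (L * ((1 - σ) * x - σ * y))]
  have h2st : 0 < 2 * s * t := by positivity
  have num : M * (2 * s * t) ≤ az ^ 2 + (s - t) ^ 2 + 2 * s * t := by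
    nlinarith [sq_nonneg (s - M * t), key]
  have hfin : M ≤ (az ^ 2 + (s - t) ^ 2 + 2 * s * t) / (2 * s * t) := (le_div_iff₀ h2st).2 num
  calc M ≤ (az ^ 2 + (s - t) ^ 2 + 2 * s * t) / (2 * s * t) := hfin
    _ = coshD (0, s) (u + (σ:ℂ) * (v - u), t) := by
        unfold coshD
        simp only [zero_sub, norm_neg]
        rw [← haz]
        field_simp
        ring

/-- attained minimum when both endpoints are nonzero. -/
lemma attained' (u v : ℂ) (hu : u ≠ 0) (hv : v ≠ 0) (huv : u ≠ v) :
    ∃ s t : ℝ, ∃ σ : ℝ, 0 < s ∧ 0 < t ∧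
      ‖((u + (σ:ℂ) * (v - u)) - (u + v) / 2)‖ ^ 2 + t ^ 2
        = ‖(v - u)‖ ^ 2 / 4 ∧
      coshD (0, s) (u + (σ:ℂ) * (v - u), t)
        = (‖u‖ + ‖v‖) / ‖(u - v)‖ := by
  set x := ‖u‖ with hx
  set y := ‖v‖ with hy
  set L := ‖(u - v)‖ with hL
  have hx0 : 0 < x := norm_pos_iff.2 hu
  have hy0 : 0 < y := norm_pos_iff.2 hv
  have hL0 : 0 < L := norm_pos_iff.2 (sub_ne_zero.2 huv)
  have hxy : 0 < x + y := by linarith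
  set σ : ℝ := x / (x + y) with hσ
  set s : ℝ := Real.sqrt (x * y) with hs
  set t : ℝ := Real.sqrt (x * y) / (x + y) * L with ht
  have hsq : Real.sqrt (x * y) ^ 2 = x * y := Real.sq_sqrt (by positivity)
  have hs0 : 0 < s := Real.sqrt_pos.2 (by positivity)
  have ht0 : 0 < t := by rw [ht]; positivity
  have ht2 : t ^ 2 = σ * (1 - σ) * L ^ 2 := by
    rw [ht, mul_pow, div_pow, hsq, hσ]; field_simp; ring
  refine ⟨s, t, σ, hs0, ht0, ?_, ?_⟩
  · have h1 : (u + (σ:ℂ) * (v - u)) - (u + v) / 2 = ((σ - 1/2 : ℝ) : ℂ) * (v - u) := by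
      push_cast; ring
    have h2 : ‖(v - u)‖ = L := by rw [hL, ← neg_sub u v, norm_neg]
    rw [h1, norm_mul, mul_pow, Complex.norm_real, Real.norm_eq_abs, sq_abs, h2, ht2]
    rw [hσ]; field_simp; ring
  · have hzt := absz_sq' u v σ t ht2
    set az := ‖(u + (σ:ℂ) * (v - u))‖ with haz
    have hzt2 : az ^ 2 + t ^ 2 = x * y := by
      rw [hzt, hσ]; field_simp; ring
    unfold coshD
    simp only [zero_sub, norm_neg]
    rw [← haz]
    have hst : s * t = x * y / (x + y) * L := by
      have h3 : s * t = Real.sqrt (x * y) ^ 2 / (x + y) * L := by rw [hs, ht]; ring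
      rw [h3, hsq]
    have hs2 : s ^ 2 = x * y := hsq
    have e1 : az ^ 2 + (s - t) ^ 2 = 2 * (x * y) - 2 * (s * t) := by
      linear_combination hzt2 + hs2
    rw [e1]
    have e2 : (1:ℝ) + (2 * (x * y) - 2 * (s * t)) / (2 * s * t) = (x * y) / (s * t) := by
      field_simp; ring
    rw [e2, hst]
    rw [div_eq_div_iff (by positivity) hL0.ne']
    field_simp

/-- approach points when `v = 0`. -/
lemma approach' (u : ℂ) (hu : u ≠ 0) (ε : ℝ) (hε : 0 < ε) :
    ∃ s t : ℝ, ∃ σ : ℝ, 0 < s ∧ 0 < t ∧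
      ‖((u + (σ:ℂ) * ((0:ℂ) - u)) - (u + 0) / 2)‖ ^ 2 + t ^ 2
        = ‖((0:ℂ) - u)‖ ^ 2 / 4 ∧
      arcosh (coshD (0, s) (u + (σ:ℂ) * ((0:ℂ) - u), t)) < ε := by
  set x := ‖u‖ with hx
  have hx0 : 0 < x := norm_pos_iff.2 hu
  set c : ℝ := Real.cosh (ε / 2) with hc
  have hc1 : 1 < c := by
    rw [hc]; exact Real.one_lt_cosh.2 (by positivity)
  set g : ℝ := 1 / c with hg
  have hg0 : 0 < g := by positivity
  have hg1 : g < 1 := by rw [hg]; rw [div_lt_one (by linarith)]; linarith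
  have h1g : 0 < 1 - g ^ 2 := by nlinarith
  set w : ℝ := Real.sqrt (1 - g ^ 2) with hw
  have hw2 : w ^ 2 = 1 - g ^ 2 := Real.sq_sqrt h1g.le
  have hw0 : 0 < w := Real.sqrt_pos.2 h1g
  have hs0 : 0 < w * x := by positivity
  have ht0 : 0 < g * w * x := by positivity
  refine ⟨w * x, g * w * x, g ^ 2, hs0, ht0, ?_, ?_⟩
  · have h1 : (u + ((g ^ 2 : ℝ):ℂ) * ((0:ℂ) - u)) - (u + 0) / 2
        = ((g ^ 2 - 1/2 : ℝ) : ℂ) * ((0:ℂ) - u) := by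
      push_cast; ring
    have habs : ‖((0:ℂ) - u)‖ = x := by rw [zero_sub, norm_neg]
    rw [h1, norm_mul, Complex.norm_real, Real.norm_eq_abs, mul_pow, sq_abs, habs]
    linear_combination (g ^ 2 * x ^ 2) * hw2
  · have hcd : coshD (0, w * x) (u + ((g ^ 2 : ℝ):ℂ) * ((0:ℂ) - u), g * w * x) = c := by
      have h0z : ‖((0:ℂ) - (u + ((g ^ 2:ℝ):ℂ) * ((0:ℂ) - u)))‖ = (1 - g ^ 2) * x := by
        have h2 : (0:ℂ) - (u + ((g ^ 2:ℝ):ℂ) * ((0:ℂ) - u)) = ((1 - g ^ 2 : ℝ):ℂ) * (-u) := by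
          push_cast; ring
        rw [h2, norm_mul, Complex.norm_real, Real.norm_eq_abs, norm_neg, abs_of_pos h1g]
      have hgc : g * c = 1 := by
        rw [hg]; field_simp
      unfold coshD
      simp only
      rw [h0z]
      have h2st : (0:ℝ) < 2 * (w * x) * (g * w * x) := by positivity
      rw [show (1:ℝ) + (((1 - g ^ 2) * x) ^ 2 + (w * x - g * w * x) ^ 2)
            / (2 * (w * x) * (g * w * x))
          = (2 * (w * x) * (g * w * x) + (((1 - g ^ 2) * x) ^ 2 + (w * x - g * w * x) ^ 2))
            / (2 * (w * x) * (g * w * x)) from by field_simp,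
        div_eq_iff h2st.ne']
      linear_combination (2 * g * x ^ 2 + x ^ 2 * (1 - g) ^ 2 - 2 * c * g * x ^ 2) * hw2
        + (-2 * (1 - g ^ 2) * x ^ 2) * hgc
    rw [hcd, arcosh_cosh' (ε / 2) (by positivity)]
    linarith

lemma cosh_geodDist' (u v : ℂ) (hu : u ≠ 0) (huv : u ≠ v) :
    Real.cosh (geodDist (geodesicUHS ((0 : ℂ) : OnePoint ℂ) OnePoint.infty)
      (geodesicUHS (u : OnePoint ℂ) (v : OnePoint ℂ)))
    = (‖u‖ + ‖v‖) / ‖(u - v)‖ := by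
  set x := ‖u‖ with hx
  set y := ‖v‖ with hy
  set L := ‖(u - v)‖ with hL
  set M := (x + y) / L with hM
  have hL0 : 0 < L := norm_pos_iff.2 (sub_ne_zero.2 huv)
  have hM1 : 1 ≤ M := by
    rw [hM, le_div_iff₀ hL0, one_mul]
    have := norm_sub_le_norm_sub_add_norm_sub u 0 v
    simpa using this
  unfold geodDist
  set D := {d : ℝ | ∃ p ∈ geodesicUHS ((0 : ℂ) : OnePoint ℂ) OnePoint.infty,
    ∃ q ∈ geodesicUHS (u : OnePoint ℂ) (v : OnePoint ℂ), d = arcosh (coshD p q)} with hD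
  have hlb : ∀ e ∈ D, arcosh M ≤ e := by
    rintro e ⟨⟨p1, ps⟩, ⟨hps, hp1⟩, ⟨q1, qt⟩, ⟨hqt, ⟨σ, hq1⟩, hcirc⟩, rfl⟩
    simp only at hps hp1 hqt hq1 hcirc
    subst hp1; subst hq1
    exact arcosh_le_arcosh' hM1 (coshD_lb' u v huv ps qt _ hps hqt σ rfl hcirc)
  have hbdd : BddBelow D := ⟨arcosh M, hlb⟩
  by_cases hv : v = 0
  · -- limit case
    subst hv
    have hMeq : M = 1 := by
      rw [hM, hy, hL, norm_zero, sub_zero, ← hx, add_zero, div_self (by rw [hx]; exact (norm_pos_iff.2 hu).ne')]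
    have harc1 : arcosh (1 : ℝ) = 0 := by
      unfold arcosh; norm_num
    have mem_of : ∀ ε > (0:ℝ), ∃ e ∈ D, e < ε := by
      intro ε hε
      obtain ⟨s, t, σ, hs0, ht0, hcirc, hlt⟩ := approach' u hu ε hε
      refine ⟨arcosh (coshD (0, s) (u + (σ:ℂ) * ((0:ℂ) - u), t)), ?_, hlt⟩
      exact ⟨(0, s), ⟨hs0, rfl⟩, (u + (σ:ℂ) * ((0:ℂ) - u), t), ⟨ht0, ⟨σ, rfl⟩, hcirc⟩, rfl⟩
    have hne : D.Nonempty := by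
      obtain ⟨e, he, _⟩ := mem_of 1 one_pos
      exact ⟨e, he⟩
    have hge : 0 ≤ sInf D := by
      apply le_csInf hne
      intro e he
      have := hlb e he
      rw [hMeq, harc1] at this
      exact this
    have hle : sInf D ≤ 0 := by
      rw [Real.sInf_le_iff hbdd hne]
      intro ε hε
      obtain ⟨e, he, hlt⟩ := mem_of ε hε
      exact ⟨e, he, by linarith⟩
    have : sInf D = 0 := le_antisymm hle hge
    rw [this, Real.cosh_zero, hMeq]
  · -- attained case
    obtain ⟨s, t, σ, hs0, ht0, hcirc, hval⟩ := attained' u v hu hv huv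
    have hmem : arcosh M ∈ D := by
      refine ⟨(0, s), ⟨hs0, rfl⟩, (u + (σ:ℂ) * (v - u), t), ⟨ht0, ⟨σ, rfl⟩, hcirc⟩, ?_⟩
      rw [hval]
    have : sInf D = arcosh M := le_antisymm (csInf_le hbdd hmem) (le_csInf ⟨_, hmem⟩ hlb)
    rw [this, cosh_arcosh' M hM1]

theorem cosh_dist_axis (a b c d : ℂ) (hdet : a * d - b * c = 1)
    (ha : a ≠ 0) (hc : c ≠ 0) (hbc : b * c ≠ 0)
    (hdisj : Disjoint (geodesicUHS ((0 : ℂ) : OnePoint ℂ) (OnePoint.infty))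
      (geodesicUHS ((-b / a : ℂ) : OnePoint ℂ) ((-d / c : ℂ) : OnePoint ℂ))) :
    Real.cosh (geodDist (geodesicUHS ((0 : ℂ) : OnePoint ℂ) (OnePoint.infty))
        (geodesicUHS ((-b / a : ℂ) : OnePoint ℂ) ((-d / c : ℂ) : OnePoint ℂ))) =
      ‖a * d‖ + ‖b * c‖ ∧
    ‖a * d‖ + ‖b * c‖ =
      ‖b * c + 1‖ + ‖b * c‖ := by
  have hb : b ≠ 0 := fun h => hbc (by rw [h, zero_mul])
  have hu : (-b / a : ℂ) ≠ 0 := by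
    simp [div_eq_zero_iff, ha, hb]
  have hsub : (-b / a : ℂ) - (-d / c) = 1 / (a * c) := by
    field_simp
    linear_combination hdet
  have huv : (-b / a : ℂ) ≠ (-d / c) := by
    intro h
    have : (-b / a : ℂ) - (-d / c) = 0 := by rw [h, sub_self]
    rw [hsub] at this
    simp [ha, hc] at this
  constructor
  · rw [cosh_geodDist' _ _ hu huv, hsub]
    have ha0 : (0:ℝ) < ‖a‖ := norm_pos_iff.2 ha
    have hc0 : (0:ℝ) < ‖c‖ := norm_pos_iff.2 hc
    simp only [norm_div, norm_mul, norm_one, norm_neg]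
    field_simp
    ring
  · have : a * d = b * c + 1 := by linear_combination hdet
    rw [this]
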